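/- arXiv:2106.02992 — 5 statements merged into one kernel-verified Lean document; each statement's English description precedes it below -/
import Mathlib

section
/- Let P be an M×M irreducible row-stochastic matrix with (unique, entrywise positive) stationary probability vector π, and let D = diag(d_1,...,d_M) with d_i ∈ (0,1). Define the vector π̃ by π̃_i = π_i / d_i and set π̂ = π̃ / (Σ_i π̃_i). Then π̂ is an entrywise positive probability vector and is a stationary probability vector of the matrix P̂ = D·P − D + I, i.e., π̂·P̂ = π̂. -/
open Matrix Finset Filter

/-- A matrix is row-stochastic if all entries are nonnegative and each row sums to 1. -/
def RowStochastic {M : ℕ} (P : Matrix (Fin M) (Fin M) ℝ) : Prop :=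
  (∀ i j, 0 ≤ P i j) ∧ (∀ i, ∑ j, P i j = 1)

/-- A matrix is irreducible if for every pair of indices `i, j` there is `k ≥ 1`
with `(P ^ k) i j > 0`. -/
def IsIrreducibleMatrix {M : ℕ} (P : Matrix (Fin M) (Fin M) ℝ) : Prop :=
  ∀ i j, ∃ k : ℕ, 1 ≤ k ∧ 0 < (P ^ k) i j

/-- `π` is a stationary probability (row) vector of `P`. -/
def IsStationaryProbVec {M : ℕ} (P : Matrix (Fin M) (Fin M) ℝ) (π : Fin M → ℝ) : Prop :=
  (∀ i, 0 ≤ π i) ∧ (∑ i, π i = 1) ∧ π ᵥ* P = π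

theorem stmt_2 {M : ℕ} (P : Matrix (Fin M) (Fin M) ℝ) (π d : Fin M → ℝ)
    (hP : RowStochastic P) (hirr : IsIrreducibleMatrix P)
    (hπ : IsStationaryProbVec P π) (hπpos : ∀ i, 0 < π i)
    (hd : ∀ i, d i ∈ Set.Ioo (0 : ℝ) 1)
    (πt : Fin M → ℝ) (hπt : ∀ i, πt i = π i / d i)
    (πhat : Fin M → ℝ) (hπhat : ∀ i, πhat i = πt i / ∑ j, πt j) :
    (∀ i, 0 < πhat i) ∧ (∑ i, πhat i = 1) ∧
      πhat ᵥ* (Matrix.diagonal d * P - Matrix.diagonal d + 1) = πhat := by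
  obtain ⟨hπ0, hπ1, hπst⟩ := hπ
  have hMpos : 0 < M := by
    by_contra h
    have : (Fin M) → False := fun i => absurd i.2 (by omega)
    have : ∑ i, π i = 0 := Finset.sum_eq_zero (fun i _ => (this i).elim)
    simp [hπ1] at this
  have hπtpos : ∀ i, 0 < πt i := fun i => by
    rw [hπt i]; exact div_pos (hπpos i) (hd i).1
  have hSpos : 0 < ∑ j, πt j := by
    have : Nonempty (Fin M) := ⟨⟨0, hMpos⟩⟩
    exact Finset.sum_pos (fun i _ => hπtpos i) univ_nonempty
  have hSne : (∑ j, πt j) ≠ 0 := ne_of_gt hSpos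
  have hhatpos : ∀ i, 0 < πhat i := fun i => by
    rw [hπhat i]; exact div_pos (hπtpos i) hSpos
  have hsum1 : ∑ i, πhat i = 1 := by
    have : ∑ i, πhat i = (∑ i, πt i) / (∑ j, πt j) := by
      rw [eq_div_iff hSne, Finset.sum_mul]
      exact Finset.sum_congr rfl fun i _ => by rw [hπhat i, div_mul_cancel₀ _ hSne]
    rw [this, div_self hSne]
  refine ⟨hhatpos, hsum1, ?_⟩
  -- πt ᵥ* D = π
  have hπtD : πt ᵥ* Matrix.diagonal d = π := by
    funext j
    rw [Matrix.vecMul_diagonal, hπt j, div_mul_cancel₀ _ (ne_of_gt (hd j).1)]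
  have hπtfix : πt ᵥ* (Matrix.diagonal d * P - Matrix.diagonal d + 1) = πt := by
    rw [Matrix.vecMul_add, Matrix.vecMul_sub, ← Matrix.vecMul_vecMul, hπtD, hπst,
      Matrix.vecMul_one]
    funext j; simp
  have hhat : πhat = (∑ j, πt j)⁻¹ • πt := by
    funext i; rw [hπhat i]; simp [div_eq_inv_mul]
  rw [hhat, Matrix.smul_vecMul, hπtfix]
end

section
/- Let P be an M×M irreducible row-stochastic matrix with stationary probability vector π, let D = diag(d_1,...,d_M) with d_i ∈ (0,1), and set P̂ = D·P − D + I. If π̃ is any entrywise nonnegative nonzero row vector satisfying π̃·(P̂ − I) = 0, then π̃·D is a positive scalar multiple of π. Consequently the stationary probability vector of P̂ is unique. -/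
open Matrix Finset Filter

/-- `π` is a stationary probability (row) vector of `P`. -/
def IsStationaryRowVec {M : ℕ} (P : Matrix (Fin M) (Fin M) ℝ) (π : Fin M → ℝ) : Prop :=
  (∀ i, 0 ≤ π i) ∧ (∑ i, π i = 1) ∧ π ᵥ* P = π

lemma pow_nonneg_entry {M : ℕ} (P : Matrix (Fin M) (Fin M) ℝ)
    (hP : ∀ i j, 0 ≤ P i j) (k : ℕ) : ∀ i j, 0 ≤ (P ^ k) i j := by
  induction k with
  | zero => intro i j; simp [Matrix.one_apply]; split <;> norm_num
  | succ n ih =>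
    intro i j
    rw [pow_succ, Matrix.mul_apply]
    exact Finset.sum_nonneg fun l _ => mul_nonneg (ih i l) (hP l j)

lemma fixed_pow {M : ℕ} (P : Matrix (Fin M) (Fin M) ℝ) (v : Fin M → ℝ)
    (hv : v ᵥ* P = v) (k : ℕ) : v ᵥ* (P ^ k) = v := by
  induction k with
  | zero => simp
  | succ n ih => rw [pow_succ, ← Matrix.vecMul_vecMul, ih, hv]

/-- A nonnegative nonzero left fixed vector of an irreducible nonnegative matrix is positive. -/
lemma fixed_pos {M : ℕ} (P : Matrix (Fin M) (Fin M) ℝ)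
    (hPn : ∀ i j, 0 ≤ P i j) (hirr : IsIrreducibleMatrix P)
    (v : Fin M → ℝ) (hv0 : ∀ i, 0 ≤ v i) (hvne : v ≠ 0)
    (hv : v ᵥ* P = v) : ∀ j, 0 < v j := by
  obtain ⟨i, hi⟩ : ∃ i, v i ≠ 0 := Function.ne_iff.mp hvne
  have hipos : 0 < v i := lt_of_le_of_ne (hv0 i) (Ne.symm hi)
  intro j
  obtain ⟨k, -, hk⟩ := hirr i j
  have hfix := fixed_pow P v hv k
  have : v j = ∑ l, v l * (P ^ k) l j := by
    rw [← congrFun hfix j]; rfl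
  rw [this]
  have hle : v i * (P ^ k) i j ≤ ∑ l, v l * (P ^ k) l j := by
    apply Finset.single_le_sum (f := fun l => v l * (P ^ k) l j)
    · intro l _
      exact mul_nonneg (hv0 l) (pow_nonneg_entry P hPn k l l |>.trans_eq rfl |> fun _ => pow_nonneg_entry P hPn k l j)
    · exact Finset.mem_univ i
  exact lt_of_lt_of_le (mul_pos hipos hk) hle

/-- Any nonnegative nonzero left fixed vector of an irreducible stochastic matrix is a
positive multiple of the stationary vector. -/
lemma fixed_prop {M : ℕ} (P : Matrix (Fin M) (Fin M) ℝ)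
    (hP : RowStochastic P) (hirr : IsIrreducibleMatrix P)
    (π : Fin M → ℝ) (hπ : IsStationaryRowVec P π)
    (v : Fin M → ℝ) (hv0 : ∀ i, 0 ≤ v i) (hvne : v ≠ 0)
    (hv : v ᵥ* P = v) : v = (∑ i, v i) • π ∧ 0 < ∑ i, v i := by
  obtain ⟨hPn, hPs⟩ := hP
  obtain ⟨hπ0, hπs, hπfix⟩ := hπ
  have hM : 0 < M := by
    rcases Nat.eq_zero_or_pos M with h | h
    · exfalso; apply hvne; funext i; exact absurd i.2 (by omega)
    · exact h
  have : Nonempty (Fin M) := ⟨⟨0, hM⟩⟩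
  have hπne : π ≠ 0 := by
    intro h; rw [h] at hπs; simp at hπs
  have hπpos : ∀ j, 0 < π j := fixed_pos P hPn hirr π hπ0 hπne hπfix
  -- minimum of v i / π i
  obtain ⟨i0, -, hmin⟩ := Finset.exists_min_image Finset.univ (fun i => v i / π i)
    ⟨⟨0, hM⟩, Finset.mem_univ _⟩
  set t := v i0 / π i0 with ht
  have hw0 : ∀ i, 0 ≤ v i - t * π i := by
    intro i
    have := hmin i (Finset.mem_univ i)
    rw [le_div_iff₀ (hπpos i)] at this
    linarith
  have hwfix : (v - t • π) ᵥ* P = v - t • π := by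
    rw [Matrix.sub_vecMul, Matrix.smul_vecMul, hv, hπfix]
  have hwzero : v - t • π = 0 := by
    by_contra hne
    have := fixed_pos P hPn hirr (v - t • π) (fun i => by simpa using hw0 i) hne hwfix i0
    have : (0:ℝ) < v i0 - t * π i0 := by simpa using this
    have : v i0 - t * π i0 = 0 := by
      rw [ht, div_mul_cancel₀ _ (ne_of_gt (hπpos i0))]; ring
    linarith
  have hveq : v = t • π := by
    funext i
    have h := congrFun hwzero i
    simp only [Pi.sub_apply, Pi.smul_apply, smul_eq_mul, Pi.zero_apply] at h
    simp only [Pi.smul_apply, smul_eq_mul]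
    linarith
  have hsum : ∑ i, v i = t := by
    rw [hveq]; simp [Finset.smul_sum, hπs]
    rw [← Finset.mul_sum, hπs, mul_one]
  constructor
  · rw [hsum]; exact hveq
  · rw [hsum, ht]
    obtain ⟨i, hi⟩ : ∃ i, v i ≠ 0 := Function.ne_iff.mp hvne
    have hvpos := fixed_pos P hPn hirr v hv0 hvne hv i0
    exact div_pos hvpos (hπpos i0)

theorem stmt_3 {M : ℕ} (P : Matrix (Fin M) (Fin M) ℝ) (π d : Fin M → ℝ)
    (hP : RowStochastic P) (hirr : IsIrreducibleMatrix P)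
    (hπ : IsStationaryRowVec P π)
    (hd : ∀ i, d i ∈ Set.Ioo (0 : ℝ) 1)
    (πt : Fin M → ℝ) (hπt_nonneg : ∀ i, 0 ≤ πt i) (hπt_ne : πt ≠ 0)
    (hπt_eig : πt ᵥ* (Matrix.diagonal d * P - Matrix.diagonal d + 1 - 1) = 0) :
    (∃ c : ℝ, 0 < c ∧ πt ᵥ* Matrix.diagonal d = c • π) ∧
      (∀ σ σ' : Fin M → ℝ,
        IsStationaryRowVec (Matrix.diagonal d * P - Matrix.diagonal d + 1) σ →
        IsStationaryRowVec (Matrix.diagonal d * P - Matrix.diagonal d + 1) σ' →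
        σ = σ') := by
  -- a general auxiliary step for any nonneg nonzero vector killed by D*P - D
  have key : ∀ w : Fin M → ℝ, (∀ i, 0 ≤ w i) → w ≠ 0 →
      w ᵥ* (Matrix.diagonal d * P - Matrix.diagonal d) = 0 →
      ∃ c : ℝ, 0 < c ∧ w ᵥ* Matrix.diagonal d = c • π := by
    intro w hw0 hwne hweig
    set v := w ᵥ* Matrix.diagonal d with hvdef
    have hvapp : ∀ i, v i = w i * d i := fun i => Matrix.vecMul_diagonal w d i
    have hv0 : ∀ i, 0 ≤ v i := fun i => by
      rw [hvapp i]; exact mul_nonneg (hw0 i) (le_of_lt (hd i).1)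
    have hvne : v ≠ 0 := by
      obtain ⟨i, hi⟩ := Function.ne_iff.mp hwne
      intro h
      have := congrFun h i
      rw [hvapp i] at this
      simp at this
      rcases this with h1 | h2
      · exact hi h1
      · exact absurd h2 (ne_of_gt (hd i).1)
    have hvfix : v ᵥ* P = v := by
      have := hweig
      rw [Matrix.vecMul_sub, sub_eq_zero] at this
      rw [hvdef, Matrix.vecMul_vecMul, this]
    obtain ⟨heq, hsum⟩ := fixed_prop P hP hirr π hπ v hv0 hvne hvfix
    exact ⟨∑ i, v i, hsum, heq⟩
  have heig' : πt ᵥ* (Matrix.diagonal d * P - Matrix.diagonal d) = 0 := by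
    have h1 : Matrix.diagonal d * P - Matrix.diagonal d + 1 - 1
        = Matrix.diagonal d * P - Matrix.diagonal d := add_sub_cancel_right _ _
    rw [h1] at hπt_eig
    exact hπt_eig
  refine ⟨key πt hπt_nonneg hπt_ne heig', ?_⟩
  -- uniqueness
  have stat_key : ∀ σ : Fin M → ℝ,
      IsStationaryRowVec (Matrix.diagonal d * P - Matrix.diagonal d + 1) σ →
      ∃ c : ℝ, 0 < c ∧ (∀ i, σ i * d i = c * π i) ∧
        c * (∑ i, π i / d i) = 1 := by
    intro σ ⟨hσ0, hσs, hσfix⟩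
    have hσne : σ ≠ 0 := by
      intro h; rw [h] at hσs; simp at hσs
    have hσeig : σ ᵥ* (Matrix.diagonal d * P - Matrix.diagonal d) = 0 := by
      rw [Matrix.vecMul_add, Matrix.vecMul_one] at hσfix
      have := sub_eq_zero.mpr hσfix
      rw [add_sub_cancel_right] at this
      exact this
    obtain ⟨c, hc, hceq⟩ := key σ hσ0 hσne hσeig
    refine ⟨c, hc, ?_, ?_⟩
    · intro i
      have := congrFun hceq i
      rw [Matrix.vecMul_diagonal] at this
      simpa using this
    · have : ∀ i, σ i = c * (π i / d i) := by
        intro i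
        have h := congrFun hceq i
        rw [Matrix.vecMul_diagonal] at h
        have hd0 : d i ≠ 0 := ne_of_gt (hd i).1
        simp only [Pi.smul_apply, smul_eq_mul] at h
        rw [← mul_div_assoc, ← h, mul_div_cancel_right₀ _ hd0]
      calc c * (∑ i, π i / d i) = ∑ i, c * (π i / d i) := by rw [Finset.mul_sum]
        _ = ∑ i, σ i := by simp_rw [← this]
        _ = 1 := hσs
  intro σ σ' hσ hσ'
  obtain ⟨c, hc, hcentry, hcsum⟩ := stat_key σ hσ
  obtain ⟨c', hc', hcentry', hcsum'⟩ := stat_key σ' hσ'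
  have hS : (∑ i, π i / d i) ≠ 0 := by
    intro h; rw [h, mul_zero] at hcsum; norm_num at hcsum
  have hcc : c = c' := by
    have : c * (∑ i, π i / d i) = c' * (∑ i, π i / d i) := by rw [hcsum, hcsum']
    exact mul_right_cancel₀ hS this
  funext i
  have h1 := hcentry i
  have h2 := hcentry' i
  rw [hcc] at h1
  have hd0 : d i ≠ 0 := ne_of_gt (hd i).1
  have : σ i * d i = σ' i * d i := by rw [h1, h2]
  exact mul_right_cancel₀ hd0 this
end

section
/- Let M ≥ 2, let π* ∈ ℝ^M be an entrywise positive probability row vector, and let P ∈ ℝ^{M×M} be an irreducible row-stochastic matrix with stationary probability vector π. Then there exists a diagonal matrix D = diag(d_1,...,d_M) with d_i ∈ (0,1) for all i such that the matrix P* = D·P − D + I is an irreducible row-stochastic matrix whose stationary probability vector is π*. -/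
open Matrix Finset Filter

lemma pow_entry_nonneg {M : ℕ} {P : Matrix (Fin M) (Fin M) ℝ}
    (h : ∀ i j, 0 ≤ P i j) : ∀ k i j, 0 ≤ (P ^ k) i j := by
  intro k
  induction k with
  | zero => intro i j; simp [Matrix.one_apply]; positivity
  | succ n ih =>
    intro i j
    rw [pow_succ, Matrix.mul_apply]
    exact Finset.sum_nonneg fun l _ => mul_nonneg (ih i l) (h l j)

lemma vecMul_pow_eq {M : ℕ} {P : Matrix (Fin M) (Fin M) ℝ} {v : Fin M → ℝ}
    (h : v ᵥ* P = v) : ∀ k, v ᵥ* (P ^ k) = v := by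
  intro k
  induction k with
  | zero => simp
  | succ n ih => rw [pow_succ, ← Matrix.vecMul_vecMul, ih, h]

lemma pow_entry_mono {M : ℕ} {A B : Matrix (Fin M) (Fin M) ℝ}
    (hB : ∀ i j, 0 ≤ B i j) (hAB : ∀ i j, B i j ≤ A i j) :
    ∀ k i j, (B ^ k) i j ≤ (A ^ k) i j := by
  intro k
  induction k with
  | zero => intro i j; simp
  | succ n ih =>
    intro i j
    rw [pow_succ, pow_succ, Matrix.mul_apply, Matrix.mul_apply]
    apply Finset.sum_le_sum
    intro l _
    exact mul_le_mul (ih i l) (hAB l j) (hB l j) (le_trans (pow_entry_nonneg hB n i l) (ih i l))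

lemma entry_formula {M : ℕ} (d : Fin M → ℝ) (P : Matrix (Fin M) (Fin M) ℝ) (i j : Fin M) :
    (Matrix.diagonal d * P - Matrix.diagonal d + 1) i j
      = d i * P i j + (if i = j then 1 - d i else 0) := by
  simp [Matrix.add_apply, Matrix.sub_apply, Matrix.diagonal_mul, Matrix.one_apply,
    Matrix.diagonal_apply]
  by_cases h : i = j <;> simp [h] <;> ring

theorem stmt_4 {M : ℕ} (hM : 2 ≤ M)
    (πstar : Fin M → ℝ) (hπstar_pos : ∀ i, 0 < πstar i) (hπstar_sum : ∑ i, πstar i = 1)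
    (P : Matrix (Fin M) (Fin M) ℝ) (π : Fin M → ℝ)
    (hP : RowStochastic P) (hirr : IsIrreducibleMatrix P)
    (hπ : IsStationaryProbVec P π) :
    ∃ d : Fin M → ℝ, (∀ i, d i ∈ Set.Ioo (0 : ℝ) 1) ∧
      RowStochastic (Matrix.diagonal d * P - Matrix.diagonal d + 1) ∧
      IsIrreducibleMatrix (Matrix.diagonal d * P - Matrix.diagonal d + 1) ∧
      IsStationaryProbVec (Matrix.diagonal d * P - Matrix.diagonal d + 1) πstar := by
  obtain ⟨hPnn, hProw⟩ := hP
  obtain ⟨hπnn, hπsum, hπstat⟩ := hπ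
  have hne : (Finset.univ : Finset (Fin M)).Nonempty := by
    have : 0 < M := by omega
    exact ⟨⟨0, this⟩, Finset.mem_univ _⟩
  -- π is entrywise positive
  have hπpos : ∀ i, 0 < π i := by
    have hex : ∃ j, 0 < π j := by
      by_contra h
      push_neg at h
      have : ∑ i, π i ≤ 0 := Finset.sum_nonpos fun i _ => h i
      linarith
    obtain ⟨j0, hj0⟩ := hex
    intro i
    obtain ⟨k, hk1, hkpos⟩ := hirr j0 i
    have hfix : π ᵥ* (P ^ k) = π := vecMul_pow_eq hπstat k
    have heq : π i = ∑ j, π j * (P ^ k) j i := by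
      conv_lhs => rw [← hfix]
      simp [Matrix.vecMul, dotProduct]
    rw [heq]
    have hterm : 0 < π j0 * (P ^ k) j0 i := mul_pos hj0 hkpos
    have hle : π j0 * (P ^ k) j0 i ≤ ∑ j, π j * (P ^ k) j i := Finset.single_le_sum
      (f := fun j => π j * (P ^ k) j i)
      (fun j _ => mul_nonneg (hπnn j) (pow_entry_nonneg hPnn k j i)) (Finset.mem_univ j0)
    linarith
  -- define c and d
  set r : ℝ := Finset.univ.inf' hne (fun i => πstar i / π i) with hr
  have hrpos : 0 < r := by
    rw [hr, Finset.lt_inf'_iff]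
    exact fun i _ => div_pos (hπstar_pos i) (hπpos i)
  set c : ℝ := r / 2 with hc
  have hcpos : 0 < c := by positivity
  set d : Fin M → ℝ := fun i => c * π i / πstar i with hd
  have hdpos : ∀ i, 0 < d i := fun i => by
    exact div_pos (mul_pos hcpos (hπpos i)) (hπstar_pos i)
  have hdlt : ∀ i, d i < 1 := by
    intro i
    have h1 : c < πstar i / π i := by
      have : r ≤ πstar i / π i := Finset.inf'_le _ (Finset.mem_univ i)
      have : c < r := by rw [hc]; linarith
      linarith [Finset.inf'_le (fun i => πstar i / π i) (Finset.mem_univ i)]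
    rw [hd]
    rw [div_lt_one (hπstar_pos i)]
    calc c * π i < (πstar i / π i) * π i := by
          exact mul_lt_mul_of_pos_right h1 (hπpos i)
      _ = πstar i := by
          rw [div_mul_eq_mul_div, mul_div_assoc, div_self (hπpos i).ne', mul_one]
  set Q := Matrix.diagonal d * P - Matrix.diagonal d + 1 with hQ
  have hQentry : ∀ i j, Q i j = d i * P i j + (if i = j then 1 - d i else 0) :=
    entry_formula d P
  have hQnn : ∀ i j, 0 ≤ Q i j := by
    intro i j
    rw [hQentry]
    have h1 : 0 ≤ d i * P i j := mul_nonneg (hdpos i).le (hPnn i j)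
    by_cases h : i = j
    · subst h; rw [if_pos rfl]; linarith [hdlt i]
    · simp only [if_neg h]; linarith
  refine ⟨d, fun i => ⟨hdpos i, hdlt i⟩, ⟨hQnn, ?_⟩, ?_, ?_⟩
  · -- row sums
    intro i
    have : ∑ j, Q i j = ∑ j, (d i * P i j + (if i = j then 1 - d i else 0)) := by
      apply Finset.sum_congr rfl; intro j _; rw [hQentry]
    rw [this, Finset.sum_add_distrib, ← Finset.mul_sum, hProw, Finset.sum_ite_eq Finset.univ i]
    simp
  · -- irreducibility
    set ε : ℝ := Finset.univ.inf' hne d with hε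
    have hεpos : 0 < ε := by
      rw [hε, Finset.lt_inf'_iff]; exact fun i _ => hdpos i
    have hεle : ∀ i, ε ≤ d i := fun i => Finset.inf'_le _ (Finset.mem_univ i)
    have hB : ∀ i j, (ε • P) i j ≤ Q i j := by
      intro i j
      rw [hQentry, Matrix.smul_apply, smul_eq_mul]
      have h1 : ε * P i j ≤ d i * P i j :=
        mul_le_mul_of_nonneg_right (hεle i) (hPnn i j)
      by_cases h : i = j
      · subst h; rw [if_pos rfl]; linarith [hdlt i]
      · simp only [if_neg h]; linarith
    have hBnn : ∀ i j, 0 ≤ (ε • P) i j := fun i j => by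
      rw [Matrix.smul_apply, smul_eq_mul]
      exact mul_nonneg hεpos.le (hPnn i j)
    intro i j
    obtain ⟨k, hk1, hkpos⟩ := hirr i j
    refine ⟨k, hk1, ?_⟩
    have h1 : ((ε • P) ^ k) i j ≤ (Q ^ k) i j := pow_entry_mono hBnn hB k i j
    have h2 : ((ε • P) ^ k) i j = ε ^ k * (P ^ k) i j := by
      rw [smul_pow, Matrix.smul_apply, smul_eq_mul]
    have : 0 < ε ^ k * (P ^ k) i j := mul_pos (pow_pos hεpos k) hkpos
    linarith [h2 ▸ h1]
  · -- stationarity of πstar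
    refine ⟨fun i => (hπstar_pos i).le, hπstar_sum, ?_⟩
    have hdiag : πstar ᵥ* Matrix.diagonal d = c • π := by
      funext i
      rw [Matrix.vecMul_diagonal]
      simp only [Pi.smul_apply, smul_eq_mul, hd]
      have h0 : πstar i ≠ 0 := (hπstar_pos i).ne'
      field_simp
    rw [Matrix.vecMul_add, Matrix.vecMul_sub, Matrix.vecMul_one,
      ← Matrix.vecMul_vecMul, hdiag]
    have : (c • π) ᵥ* P = c • π := by
      rw [Matrix.smul_vecMul, hπstat]
    rw [this]
    simp
end

section
/- Let M ≥ 2, let π* ∈ ℝ^M be an entrywise positive probability row vector, and let P ∈ ℝ^{M×M} be an irreducible row-stochastic matrix with stationary probability vector π. Define d̂_i = π_i / π*_i and d_i = d̂_i / (Σ_{j=1}^M d̂_j). Then d_i ∈ (0,1) for every i, and π* is the stationary probability vector of the irreducible row-stochastic matrix P* = diag(d)·P − diag(d) + I; that is, π*·P* = π*. -/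
open Matrix Finset Filter

lemma pow_entry_lower {M : ℕ} {P Q : Matrix (Fin M) (Fin M) ℝ} {c : ℝ}
    (hc : 0 ≤ c) (hP : ∀ i j, 0 ≤ P i j)
    (hPQ : ∀ i j, c * P i j ≤ Q i j) :
    ∀ k i j, c ^ k * (P ^ k) i j ≤ (Q ^ k) i j := by
  intro k
  induction k with
  | zero => intro i j; simp
  | succ n ih =>
    intro i j
    rw [pow_succ, pow_succ, pow_succ, Matrix.mul_apply, Matrix.mul_apply, Finset.mul_sum]
    refine Finset.sum_le_sum fun l _ => ?_
    have h1 : c ^ n * (P ^ n) i l ≤ (Q ^ n) i l := ih i l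
    have h2 : c * P l j ≤ Q l j := hPQ l j
    calc c ^ n * c * ((P ^ n) i l * P l j)
        = (c ^ n * (P ^ n) i l) * (c * P l j) := by ring
      _ ≤ (Q ^ n) i l * Q l j :=
        mul_le_mul h1 h2 (mul_nonneg hc (hP l j))
          (le_trans (mul_nonneg (pow_nonneg hc n) (pow_entry_nonneg hP n i l)) h1)

theorem stmt_5 {M : ℕ} (hM : 2 ≤ M)
    (πstar : Fin M → ℝ) (hπstar_pos : ∀ i, 0 < πstar i) (hπstar_sum : ∑ i, πstar i = 1)
    (P : Matrix (Fin M) (Fin M) ℝ) (π : Fin M → ℝ)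
    (hP : RowStochastic P) (hirr : IsIrreducibleMatrix P)
    (hπ : IsStationaryProbVec P π)
    (dhat d : Fin M → ℝ)
    (hdhat : ∀ i, dhat i = π i / πstar i)
    (hd : ∀ i, d i = dhat i / ∑ j, dhat j) :
    (∀ i, d i ∈ Set.Ioo (0 : ℝ) 1) ∧
      RowStochastic (Matrix.diagonal d * P - Matrix.diagonal d + 1) ∧
      IsIrreducibleMatrix (Matrix.diagonal d * P - Matrix.diagonal d + 1) ∧
      πstar ᵥ* (Matrix.diagonal d * P - Matrix.diagonal d + 1) = πstar := by
  haveI : NeZero M := ⟨by omega⟩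
  haveI : Nontrivial (Fin M) := Fin.nontrivial_iff_two_le.mpr hM
  set Q : Matrix (Fin M) (Fin M) ℝ := Matrix.diagonal d * P - Matrix.diagonal d + 1 with hQdef
  -- entry formula for Q
  have hQ : ∀ i j, Q i j = d i * P i j + (if i = j then 1 - d i else 0) := by
    intro i j
    rcases eq_or_ne i j with rfl | hij <;>
      simp [hQdef, Matrix.sub_apply, Matrix.add_apply, Matrix.one_apply,
        Matrix.diagonal_apply, Matrix.diagonal_mul, *] <;> ring
  -- stationarity of π under powers
  have hπP : ∀ k, π ᵥ* (P ^ k) = π := by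
    intro k
    induction k with
    | zero => simp
    | succ n ih => rw [pow_succ, ← Matrix.vecMul_vecMul, ih, hπ.2.2]
  -- π is entrywise positive
  have hex : ∃ j0, 0 < π j0 := by
    by_contra h
    push_neg at h
    have hz : ∑ i, π i = 0 := Finset.sum_eq_zero fun i _ => le_antisymm (h i) (hπ.1 i)
    rw [hπ.2.1] at hz; norm_num at hz
  obtain ⟨j0, hj0⟩ := hex
  have hπpos : ∀ i, 0 < π i := by
    intro i
    obtain ⟨k, _, hk⟩ := hirr j0 i
    have heq : π i = ∑ l, π l * (P ^ k) l i := by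
      conv_lhs => rw [← hπP k]
      simp [Matrix.vecMul, dotProduct]
    rw [heq]
    exact Finset.sum_pos'
      (fun l _ => mul_nonneg (hπ.1 l) (pow_entry_nonneg hP.1 k l i))
      ⟨j0, Finset.mem_univ _, mul_pos hj0 hk⟩
  -- dhat positive, sum positive
  have hdhat_pos : ∀ i, 0 < dhat i := fun i => by
    rw [hdhat]; exact div_pos (hπpos i) (hπstar_pos i)
  have hS : 0 < ∑ j, dhat j :=
    Finset.sum_pos (fun j _ => hdhat_pos j) Finset.univ_nonempty
  -- d in (0,1)
  have hd01 : ∀ i, d i ∈ Set.Ioo (0 : ℝ) 1 := by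
    intro i
    constructor
    · rw [hd]; exact div_pos (hdhat_pos i) hS
    · rw [hd, div_lt_one hS]
      obtain ⟨j, hj⟩ := exists_ne i
      calc dhat i < dhat i + ∑ l ∈ Finset.univ.erase i, dhat l := by
            have : 0 < ∑ l ∈ Finset.univ.erase i, dhat l :=
              Finset.sum_pos (fun l _ => hdhat_pos l)
                ⟨j, Finset.mem_erase.mpr ⟨hj, Finset.mem_univ _⟩⟩
            linarith
        _ = ∑ l, dhat l := Finset.add_sum_erase _ _ (Finset.mem_univ i)
  -- row stochastic
  have hQrs : RowStochastic Q := by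
    constructor
    · intro i j
      rw [hQ]
      rcases eq_or_ne i j with rfl | hij
      · rw [if_pos rfl]
        have := (hd01 i).2
        have := mul_nonneg (le_of_lt (hd01 i).1) (hP.1 i i)
        linarith
      · simp only [if_neg hij, add_zero]
        exact mul_nonneg (le_of_lt (hd01 i).1) (hP.1 i j)
    · intro i
      have : ∑ j, Q i j = ∑ j, (d i * P i j + (if i = j then 1 - d i else 0)) := by
        exact Finset.sum_congr rfl fun j _ => hQ i j
      rw [this, Finset.sum_add_distrib, ← Finset.mul_sum, hP.2 i]
      simp
  -- irreducibility
  have hQirr : IsIrreducibleMatrix Q := by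
    have hne : (Finset.univ : Finset (Fin M)).Nonempty := Finset.univ_nonempty
    set c := Finset.univ.inf' hne d with hc
    have hcpos : 0 < c := (Finset.lt_inf'_iff hne).mpr fun l _ => (hd01 l).1
    have hPQ : ∀ i j, c * P i j ≤ Q i j := by
      intro i j
      rw [hQ]
      have h1 : c * P i j ≤ d i * P i j :=
        mul_le_mul_of_nonneg_right (Finset.inf'_le d (Finset.mem_univ i)) (hP.1 i j)
      have h2 : (0:ℝ) ≤ (if i = j then 1 - d i else 0) := by
        rcases eq_or_ne i j with rfl | hij
        · rw [if_pos rfl]; linarith [(hd01 i).2]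
        · simp [hij]
      linarith
    intro i j
    obtain ⟨k, hk1, hk⟩ := hirr i j
    exact ⟨k, hk1, lt_of_lt_of_le (mul_pos (pow_pos hcpos k) hk)
      (pow_entry_lower (le_of_lt hcpos) hP.1 hPQ k i j)⟩
  -- stationarity of πstar
  have hstat : πstar ᵥ* Q = πstar := by
    funext j
    have hvm : (πstar ᵥ* Q) j = ∑ i, πstar i * Q i j := by
      simp [Matrix.vecMul, dotProduct]
    have hkey : ∀ i, πstar i * d i = π i / (∑ l, dhat l) := by
      intro i
      rw [hd, hdhat]
      field_simp [(hπstar_pos i).ne', hS.ne']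
    have hπj : ∑ i, π i * P i j = π j := by
      have := congrFun hπ.2.2 j
      simpa [Matrix.vecMul, dotProduct] using this
    rw [hvm]
    have : ∑ i, πstar i * Q i j
        = ∑ i, (πstar i * d i * P i j + πstar i * (if i = j then 1 - d i else 0)) := by
      refine Finset.sum_congr rfl fun i _ => ?_
      rw [hQ]; ring
    rw [this, Finset.sum_add_distrib]
    have h2 : ∑ i, πstar i * (if i = j then 1 - d i else 0) = πstar j * (1 - d j) := by
      rw [Finset.sum_congr rfl (fun i _ => by rw [mul_ite, mul_zero])]
      simp [Finset.sum_ite_eq']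
    have h1 : ∑ i, πstar i * d i * P i j = π j / (∑ l, dhat l) := by
      have : ∀ i, πstar i * d i * P i j = (π i * P i j) / (∑ l, dhat l) := by
        intro i; rw [hkey]; ring
      rw [Finset.sum_congr rfl fun i _ => this i, ← Finset.sum_div, hπj]
    rw [h1, h2]
    have hdj : πstar j * d j = π j / (∑ l, dhat l) := hkey j
    ring_nf
    ring_nf at hdj
    linarith
  exact ⟨hd01, hQrs, hQirr, hstat⟩
end

section
/- Let P be an M×M irreducible row-stochastic matrix with stationary probability vector π, and let p* ∈ ℝ^M be an entrywise positive probability row vector. If D = diag(d_1,...,d_M) with d_i ∈ (0,1) is such that p* is a stationary probability vector of P̂ = D·P − D + I, then necessarily p*·D = c·π for some scalar c > 0; equivalently, d_i = c·π_i / p*_i for every i. -/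
open Matrix Finset Filter

theorem stmt_14 {M : ℕ} (P : Matrix (Fin M) (Fin M) ℝ) (π pstar d : Fin M → ℝ)
    (hP : RowStochastic P) (hirr : IsIrreducibleMatrix P)
    (hπ : IsStationaryRowVec P π)
    (hpstar_pos : ∀ i, 0 < pstar i) (hpstar_sum : ∑ i, pstar i = 1)
    (hd : ∀ i, d i ∈ Set.Ioo (0 : ℝ) 1)
    (hstat : IsStationaryRowVec (Matrix.diagonal d * P - Matrix.diagonal d + 1) pstar) :
    ∃ c : ℝ, 0 < c ∧ (pstar ᵥ* Matrix.diagonal d = c • π) ∧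
      (∀ i, d i = c * π i / pstar i) := by
  obtain ⟨hPnn, hProw⟩ := hP
  obtain ⟨hπnn, hπsum, hπstat⟩ := hπ
  obtain ⟨hq0, hqsum, hqstat⟩ := hstat
  have hne : Nonempty (Fin M) := by
    by_contra h
    rw [not_nonempty_iff] at h
    rw [Finset.univ_eq_empty, Finset.sum_empty] at hpstar_sum
    norm_num at hpstar_sum
  set q : Fin M → ℝ := fun i => pstar i * d i with hqdef
  have hqpos : ∀ i, 0 < q i := fun i => mul_pos (hpstar_pos i) (hd i).1
  have hdiagq : pstar ᵥ* Matrix.diagonal d = q := by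
    funext i; simp [Matrix.vecMul_diagonal, hqdef]
  have hqP : q ᵥ* P = q := by
    have h := hqstat
    rw [Matrix.vecMul_add, Matrix.vecMul_sub, Matrix.vecMul_one, ← Matrix.vecMul_vecMul, hdiagq] at h
    funext i
    have h2 := congrFun h i
    simp only [Pi.add_apply, Pi.sub_apply] at h2
    linarith
  have hpow : ∀ k : ℕ, ∀ i j : Fin M, 0 ≤ (P ^ k) i j := by
    intro k
    induction k with
    | zero =>
      intro i j
      rcases eq_or_ne i j with h | h <;> simp [pow_zero, Matrix.one_apply, h]
    | succ n ih =>
      intro i j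
      rw [pow_succ, Matrix.mul_apply]
      exact Finset.sum_nonneg fun l _ => mul_nonneg (ih i l) (hPnn l j)
  have hvpow : ∀ (v : Fin M → ℝ), v ᵥ* P = v → ∀ k, v ᵥ* (P ^ k) = v := by
    intro v hv k
    induction k with
    | zero => simp
    | succ n ih => rw [pow_succ, ← Matrix.vecMul_vecMul, ih, hv]
  obtain ⟨i0, hi0⟩ : ∃ i, 0 < π i := by
    by_contra h
    push_neg at h
    have : ∀ i ∈ Finset.univ, π i = 0 := fun i _ => le_antisymm (h i) (hπnn i)
    rw [Finset.sum_eq_zero this] at hπsum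
    norm_num at hπsum
  have hπpos : ∀ j, 0 < π j := by
    intro j
    obtain ⟨k, hk1, hkpos⟩ := hirr i0 j
    have h1 : π ᵥ* (P ^ k) = π := hvpow π hπstat k
    have h2 : π j = ∑ i, π i * (P ^ k) i j := by
      conv_lhs => rw [← h1]
      simp [Matrix.vecMul, dotProduct]
    have h3 : π i0 * (P ^ k) i0 j ≤ ∑ i, π i * (P ^ k) i j :=
      Finset.single_le_sum (fun i _ => mul_nonneg (hπnn i) (hpow k i j)) (Finset.mem_univ i0)
    calc (0:ℝ) < π i0 * (P ^ k) i0 j := mul_pos hi0 hkpos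
      _ ≤ ∑ i, π i * (P ^ k) i j := h3
      _ = π j := h2.symm
  obtain ⟨m, -, hm⟩ := Finset.exists_min_image Finset.univ (fun i => q i / π i)
    ⟨Classical.arbitrary _, Finset.mem_univ _⟩
  set c : ℝ := q m / π m with hcdef
  have hcpos : 0 < c := div_pos (hqpos m) (hπpos m)
  set x : Fin M → ℝ := q - c • π with hxdef
  have hxnn : ∀ i, 0 ≤ x i := by
    intro i
    have := (le_div_iff₀ (hπpos i)).mp (hm i (Finset.mem_univ i))
    simp [hxdef]
    linarith
  have hxm : x m = 0 := by
    have hπm := (hπpos m).ne'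
    simp only [hxdef, Pi.sub_apply, Pi.smul_apply, smul_eq_mul, hcdef]
    field_simp
    ring
  have hxP : x ᵥ* P = x := by
    rw [hxdef, Matrix.sub_vecMul, Matrix.smul_vecMul, hqP, hπstat]
  have hxzero : ∀ j, x j = 0 := by
    intro j
    obtain ⟨k, hk1, hkpos⟩ := hirr j m
    have h1 : x ᵥ* (P ^ k) = x := hvpow x hxP k
    have h2 : ∑ i, x i * (P ^ k) i m = 0 := by
      have h := congrFun h1 m
      rw [hxm] at h
      rw [← h]
      simp [Matrix.vecMul, dotProduct]
    have h3 := (Finset.sum_eq_zero_iff_of_nonneg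
      (fun i _ => mul_nonneg (hxnn i) (hpow k i m))).mp h2 j (Finset.mem_univ j)
    exact (mul_eq_zero.mp h3).resolve_right (ne_of_gt hkpos)
  have hqcπ : ∀ i, q i = c * π i := by
    intro i
    have := hxzero i
    simp [hxdef] at this
    linarith
  refine ⟨c, hcpos, ?_, ?_⟩
  · rw [hdiagq]
    funext i
    simp [hqcπ i]
  · intro i
    have h := hqcπ i
    have hp := (hpstar_pos i).ne'
    field_simp [hqdef] at h ⊢
    linarith
end
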